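/- Suppose m divides n, A ∈ ℝ^{n×n} is partitioned into column blocks A_1,…,A_m ∈ ℝ^{n×(n/m)} and B ∈ ℝ^{n×n} into row blocks B_1,…,B_m ∈ ℝ^{(n/m)×n}, with ‖A‖_F ≤ η and ‖B‖_F ≤ η. Let K ≥ 1, let α_1,…,α_K, β_1,…,β_K ∈ ℝ^m and d ∈ ℝ^K, and define the error matrix E = I_m − Σ_{i=1}^{K} d_i α_i β_iᵀ, the decoded product Ĉ = Σ_{i=1}^{K} d_i (Σ_{j=1}^{m} α_i[j] A_j)(Σ_{j'=1}^{m} β_i[j'] B_{j'}), and C = AB. Then ‖C − Ĉ‖_F ≤ ‖E‖_F · m · η². -/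
import Mathlib


open Matrix

/-- Frobenius norm of a real matrix. -/
noncomputable def frobNorm {α β : Type*} [Fintype α] [Fintype β] (M : Matrix α β ℝ) : ℝ :=
  Real.sqrt (∑ i, ∑ j, M i j ^ 2)

/-- The `i`-th column block `A_i ∈ ℝ^{n × (n/m)}` of `A ∈ ℝ^{n × n}` (with `n = m * t`,
columns indexed as `Fin m × Fin t`). Here `i : Fin m` is 0-indexed. -/
def colBlk {m t : ℕ} (A : Matrix (Fin (m * t)) (Fin m × Fin t) ℝ) (i : Fin m) :
    Matrix (Fin (m * t)) (Fin t) ℝ :=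
  Matrix.of fun v c => A v (i, c)

/-- The `j`-th row block `B_j ∈ ℝ^{(n/m) × n}` of `B ∈ ℝ^{n × n}`. -/
def rowBlk {m t : ℕ} (B : Matrix (Fin m × Fin t) (Fin (m * t)) ℝ) (j : Fin m) :
    Matrix (Fin t) (Fin (m * t)) ℝ :=
  Matrix.of fun c w => B (j, c) w

attribute [local instance] Matrix.frobeniusSeminormedAddCommGroup Matrix.frobeniusNormedSpace

lemma frobNorm_eq_norm {a b : Type*} [Fintype a] [Fintype b] (M : Matrix a b ℝ) :
    frobNorm M = ‖M‖ := by
  rw [Matrix.frobenius_norm_def, ← Real.sqrt_eq_rpow, frobNorm]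
  congr 1
  refine Finset.sum_congr rfl fun i _ => Finset.sum_congr rfl fun j _ => ?_
  rw [Real.norm_eq_abs, show (2:ℝ) = ((2:ℕ):ℝ) by norm_num, Real.rpow_natCast, sq_abs]

lemma frobNorm_nonneg {a b : Type*} [Fintype a] [Fintype b] (M : Matrix a b ℝ) :
    0 ≤ frobNorm M := Real.sqrt_nonneg _

lemma key_identity {m t K : ℕ}
    (A : Matrix (Fin (m * t)) (Fin m × Fin t) ℝ)
    (B : Matrix (Fin m × Fin t) (Fin (m * t)) ℝ)
    (α β : Fin K → Fin m → ℝ) (d : Fin K → ℝ) :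
    A * B - ∑ i, d i •
        ((∑ j : Fin m, α i j • colBlk A j) * (∑ j' : Fin m, β i j' • rowBlk B j'))
    = ∑ j : Fin m, ∑ j' : Fin m,
        (((1 : Matrix (Fin m) (Fin m) ℝ) - ∑ i, d i • vecMulVec (α i) (β i)) j j') •
          (colBlk A j * rowBlk B j') := by
  have hAB : A * B = ∑ j : Fin m, colBlk A j * rowBlk B j := by
    ext v w
    simp [Matrix.mul_apply, Matrix.sum_apply, colBlk, rowBlk, Fintype.sum_prod_type]
  have h1 : ∀ i, (∑ j : Fin m, α i j • colBlk A j) * (∑ j' : Fin m, β i j' • rowBlk B j')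
      = ∑ j : Fin m, ∑ j' : Fin m, (α i j * β i j') • (colBlk A j * rowBlk B j') := by
    intro i
    simp only [Matrix.sum_mul, Matrix.mul_sum, Matrix.smul_mul, Matrix.mul_smul, smul_smul,
      Finset.smul_sum]
    rw [Finset.sum_comm]
    refine Finset.sum_congr rfl fun j _ => Finset.sum_congr rfl fun j' _ => ?_
    rw [mul_comm (β i j')]
  have h2 : (∑ i, d i •
        ((∑ j : Fin m, α i j • colBlk A j) * (∑ j' : Fin m, β i j' • rowBlk B j')))
      = ∑ j : Fin m, ∑ j' : Fin m,
          (∑ i, d i * (α i j * β i j')) • (colBlk A j * rowBlk B j') := by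
    simp only [h1, Finset.smul_sum, smul_smul]
    rw [Finset.sum_comm]
    refine Finset.sum_congr rfl fun j _ => ?_
    rw [Finset.sum_comm]
    refine Finset.sum_congr rfl fun j' _ => ?_
    rw [← Finset.sum_smul]
  have hE : ∀ j j' : Fin m,
      (((1 : Matrix (Fin m) (Fin m) ℝ) - ∑ i, d i • vecMulVec (α i) (β i)) j j')
        = (if j = j' then (1:ℝ) else 0) - ∑ i, d i * (α i j * β i j') := by
    intro j j'
    simp [Matrix.sub_apply, Matrix.one_apply, Matrix.sum_apply, vecMulVec_apply, mul_assoc]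
  rw [hAB, h2]
  simp only [hE, sub_smul, ite_smul, one_smul, zero_smul, Finset.sum_sub_distrib]
  congr 1
  refine (Finset.sum_congr rfl fun j _ => ?_).symm
  simp

lemma frob_sq_eq {a b : Type*} [Fintype a] [Fintype b] (M : Matrix a b ℝ) :
    frobNorm M ^ 2 = ∑ i, ∑ j, M i j ^ 2 :=
  Real.sq_sqrt (Finset.sum_nonneg fun i _ => Finset.sum_nonneg fun j _ => sq_nonneg _)

lemma sum_sq_colBlk {m t : ℕ} (A : Matrix (Fin (m * t)) (Fin m × Fin t) ℝ) :
    ∑ j : Fin m, frobNorm (colBlk A j) ^ 2 = frobNorm A ^ 2 := by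
  simp only [frob_sq_eq, colBlk, Matrix.of_apply]
  rw [Finset.sum_comm]
  exact Finset.sum_congr rfl fun v _ => (Fintype.sum_prod_type (fun p => A v p ^ 2)).symm

lemma sum_sq_rowBlk {m t : ℕ} (B : Matrix (Fin m × Fin t) (Fin (m * t)) ℝ) :
    ∑ j : Fin m, frobNorm (rowBlk B j) ^ 2 = frobNorm B ^ 2 := by
  simp only [frob_sq_eq, rowBlk, Matrix.of_apply]
  exact (Fintype.sum_prod_type (fun p => ∑ w, B p w ^ 2)).symm

theorem decoded_product_error_bound {m t K : ℕ} (hm : 1 ≤ m) (hK : 1 ≤ K) (η : ℝ)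
    (A : Matrix (Fin (m * t)) (Fin m × Fin t) ℝ)
    (B : Matrix (Fin m × Fin t) (Fin (m * t)) ℝ)
    (hA : frobNorm A ≤ η) (hB : frobNorm B ≤ η)
    (α β : Fin K → Fin m → ℝ) (d : Fin K → ℝ) :
    frobNorm (A * B - ∑ i, d i •
        ((∑ j : Fin m, α i j • colBlk A j) * (∑ j' : Fin m, β i j' • rowBlk B j')))
      ≤ frobNorm ((1 : Matrix (Fin m) (Fin m) ℝ) - ∑ i, d i • vecMulVec (α i) (β i))
          * m * η ^ 2 := by
  set E := (1 : Matrix (Fin m) (Fin m) ℝ) - ∑ i, d i • vecMulVec (α i) (β i) with hEdef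
  rw [key_identity A B α β d]
  have hη : 0 ≤ η := le_trans (frobNorm_nonneg A) hA
  have step1 : frobNorm (∑ j : Fin m, ∑ j', E j j' • (colBlk A j * rowBlk B j'))
      ≤ ∑ j : Fin m, ∑ j' : Fin m,
          |E j j'| * (frobNorm (colBlk A j) * frobNorm (rowBlk B j')) := by
    rw [frobNorm_eq_norm]
    refine le_trans (norm_sum_le _ _) (Finset.sum_le_sum fun j _ =>
      le_trans (norm_sum_le _ _) (Finset.sum_le_sum fun j' _ => ?_))
    rw [norm_smul, Real.norm_eq_abs, frobNorm_eq_norm, frobNorm_eq_norm]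
    exact mul_le_mul_of_nonneg_left (Matrix.frobenius_norm_mul _ _) (abs_nonneg _)
  have step2 : ∑ j : Fin m, ∑ j' : Fin m,
        |E j j'| * (frobNorm (colBlk A j) * frobNorm (rowBlk B j'))
      ≤ frobNorm E * (frobNorm A * frobNorm B) := by
    rw [show (∑ j : Fin m, ∑ j' : Fin m,
          |E j j'| * (frobNorm (colBlk A j) * frobNorm (rowBlk B j')))
        = ∑ p : Fin m × Fin m,
            |E p.1 p.2| * (frobNorm (colBlk A p.1) * frobNorm (rowBlk B p.2))
        from (Fintype.sum_prod_type (fun p : Fin m × Fin m =>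
          |E p.1 p.2| * (frobNorm (colBlk A p.1) * frobNorm (rowBlk B p.2)))).symm]
    refine le_trans (Real.sum_mul_le_sqrt_mul_sqrt _ _ _) ?_
    have e1 : Real.sqrt (∑ p : Fin m × Fin m, |E p.1 p.2| ^ 2) = frobNorm E := by
      rw [frobNorm]
      congr 1
      rw [Fintype.sum_prod_type]
      simp [sq_abs]
    have e2 : Real.sqrt (∑ p : Fin m × Fin m,
          (frobNorm (colBlk A p.1) * frobNorm (rowBlk B p.2)) ^ 2)
        = frobNorm A * frobNorm B := by
      have hs : (∑ p : Fin m × Fin m,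
            (frobNorm (colBlk A p.1) * frobNorm (rowBlk B p.2)) ^ 2)
          = (∑ j : Fin m, frobNorm (colBlk A j) ^ 2) *
              (∑ j' : Fin m, frobNorm (rowBlk B j') ^ 2) := by
        rw [Finset.sum_mul_sum, Fintype.sum_prod_type]
        simp [mul_pow]
      rw [hs, sum_sq_colBlk, sum_sq_rowBlk,
        Real.sqrt_mul (sq_nonneg _), Real.sqrt_sq (frobNorm_nonneg _),
        Real.sqrt_sq (frobNorm_nonneg _)]
    rw [e1, e2]
  refine le_trans (le_trans step1 step2) ?_
  rw [mul_assoc]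
  refine mul_le_mul_of_nonneg_left ?_ (frobNorm_nonneg E)
  calc frobNorm A * frobNorm B ≤ η * η :=
        mul_le_mul hA hB (frobNorm_nonneg B) hη
    _ = η ^ 2 := (sq η).symm
    _ ≤ m * η ^ 2 := le_mul_of_one_le_left (by positivity) (by exact_mod_cast hm)
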